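/- Let α > 0, μ < 0, β, h ∈ ℝ, and set s₀ = (αh - β)/(√(-μ)(1+α²)) and Ω₀ = (h + αβ)/(1+α²). Then the functions θ₀(ξ) = 2·arctan(e^{√(-μ)·ξ}), p₀(ξ) = √(-μ), q₀(ξ) = 0 solve the desingularized coherent structure system θ' = sin(θ)·p, p' = h - Ω₀ - α s₀ p + s₀ q - (p² - q² + μ)·cos(θ), q' = α Ω₀ - β - s₀ p - α s₀ q - 2 p q cos(θ) (i.e. the system with c_cp = 0). -/

import Mathlib

open Real

/-- The explicit homogeneous domain wall `θ₀(ξ) = 2 arctan(e^{√(-μ)ξ})`,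
`p₀ ≡ √(-μ)`, `q₀ ≡ 0` solves the desingularized coherent structure system of
the LLGS equation with `c_cp = 0`, with speed `s₀ = (αh - β)/(√(-μ)(1+α²))` and
frequency `Ω₀ = (h + αβ)/(1+α²)`. -/
theorem homogeneous_DW_solves_coherent_system (α β h μ s₀ Ω₀ : ℝ)
    (hα : 0 < α) (hμ : μ < 0)
    (hs : s₀ = (α * h - β) / (Real.sqrt (-μ) * (1 + α ^ 2)))
    (hΩ : Ω₀ = (h + α * β) / (1 + α ^ 2)) :
    ∀ ξ : ℝ,
      HasDerivAt (fun ξ : ℝ => 2 * Real.arctan (Real.exp (Real.sqrt (-μ) * ξ)))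
        (Real.sin (2 * Real.arctan (Real.exp (Real.sqrt (-μ) * ξ))) * Real.sqrt (-μ)) ξ ∧
      HasDerivAt (fun _ : ℝ => Real.sqrt (-μ))
        (h - Ω₀ - α * s₀ * Real.sqrt (-μ) + s₀ * 0
          - (Real.sqrt (-μ) ^ 2 - 0 ^ 2 + μ)
            * Real.cos (2 * Real.arctan (Real.exp (Real.sqrt (-μ) * ξ)))) ξ ∧
      HasDerivAt (fun _ : ℝ => (0 : ℝ))
        (α * Ω₀ - β - s₀ * Real.sqrt (-μ) - α * s₀ * 0
          - 2 * Real.sqrt (-μ) * 0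
            * Real.cos (2 * Real.arctan (Real.exp (Real.sqrt (-μ) * ξ)))) ξ := by
  intro ξ
  have hcpos : 0 < Real.sqrt (-μ) := Real.sqrt_pos.mpr (by linarith)
  have hc2 : Real.sqrt (-μ) ^ 2 = -μ := Real.sq_sqrt (by linarith)
  set c := Real.sqrt (-μ) with hcdef
  have hcne : c ≠ 0 := ne_of_gt hcpos
  have hαne : (1 + α ^ 2 : ℝ) ≠ 0 := by positivity
  refine ⟨?_, ?_, ?_⟩
  · have h1 : HasDerivAt (fun ξ : ℝ => Real.exp (c * ξ)) (Real.exp (c * ξ) * c) ξ := by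
      have := ((hasDerivAt_id ξ).const_mul c).exp
      simpa [mul_comm] using this
    have h2 := (Real.hasDerivAt_arctan (Real.exp (c * ξ))).comp ξ h1
    have h3 := h2.const_mul 2
    refine h3.congr_deriv ?_
    symm
    have hx : (0 : ℝ) < 1 + Real.exp (c * ξ) ^ 2 := by positivity
    have hsq : Real.sqrt (1 + Real.exp (c * ξ) ^ 2) ^ 2 = 1 + Real.exp (c * ξ) ^ 2 :=
      Real.sq_sqrt hx.le
    have hsp : (0 : ℝ) < Real.sqrt (1 + Real.exp (c * ξ) ^ 2) := Real.sqrt_pos.mpr hx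
    rw [Real.sin_two_mul, Real.sin_arctan, Real.cos_arctan]
    field_simp
    nlinarith [hsq, Real.exp_pos (c * ξ)]
  · have hval : h - Ω₀ - α * s₀ * c + s₀ * 0
        - (c ^ 2 - 0 ^ 2 + μ) * Real.cos (2 * Real.arctan (Real.exp (c * ξ))) = 0 := by
      have : c ^ 2 - 0 ^ 2 + μ = 0 := by rw [hc2]; ring
      rw [this]
      rw [hs, hΩ]
      field_simp
      ring
    rw [hval]
    exact hasDerivAt_const ξ c
  · have hval : α * Ω₀ - β - s₀ * c - α * s₀ * 0
        - 2 * c * 0 * Real.cos (2 * Real.arctan (Real.exp (c * ξ))) = 0 := by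
      rw [hs, hΩ]
      field_simp
      ring
    rw [hval]
    exact hasDerivAt_const ξ (0:ℝ)
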